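/- Let n1, n2 be positive integers, let J : ℝ^{n1×n2} × ℝ^{n1} → ℝ be lower semicontinuous and bounded on bounded sets, let μ2^d ∈ ℝ^{n2} with μ2^d ≥ 0 componentwise, and let c_d ∈ ℝ^{n1×n2}. Let (γ_k)_{k∈ℕ} be positive reals with γ_k → 0, and for each k let (π_k, μ_{1,k}, c_k) minimize (π, μ1, c) ↦ J(π, μ1) + (1/(2γ_k))‖c − c_d‖_F² over the regularized bilevel feasible set F_{γ_k}(μ2^d). Then there exist a subsequence and a point (π̄, μ̄1) ∈ ℝ^{n1×n2} × ℝ^{n1} such that along this subsequence (π_k, μ_{1,k}, c_k) → (π̄, μ̄1, c_d), and moreover μ̄1 ≥ 0 componentwise, Σ_i (μ̄1)_i = Σ_j (μ2^d)_j, and π̄ solves the Hitchcock problem (H) w.r.t. μ̄1, μ2^d, c_d. -/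

import Mathlib

open Filter Topology

set_option maxHeartbeats 2000000

noncomputable section

/-- The transport polytope Π(μ1, μ2). -/
def transportPolytope {n1 n2 : ℕ} (μ1 : Fin n1 → ℝ) (μ2 : Fin n2 → ℝ) :
    Set (Fin n1 → Fin n2 → ℝ) :=
  {π | (∀ i j, 0 ≤ π i j) ∧ (∀ i, (∑ j, π i j) = μ1 i) ∧ (∀ j, (∑ i, π i j) = μ2 j)}

/-- The Frobenius inner product ⟨c, π⟩_F.  Note that `frob π π = ‖π‖_F²`. -/
def frob {n1 n2 : ℕ} (c π : Fin n1 → Fin n2 → ℝ) : ℝ := ∑ i, ∑ j, c i j * π i j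

/-- π solves the Hitchcock problem (H) w.r.t. μ1, μ2, c. -/
def SolvesH {n1 n2 : ℕ} (μ1 : Fin n1 → ℝ) (μ2 : Fin n2 → ℝ)
    (c π : Fin n1 → Fin n2 → ℝ) : Prop :=
  π ∈ transportPolytope μ1 μ2 ∧
    ∀ θ ∈ transportPolytope μ1 μ2, frob c π ≤ frob c θ

/-- π solves the regularized Hitchcock problem (H_γ) w.r.t. μ1, μ2, c. -/
def SolvesHreg {n1 n2 : ℕ} (γ : ℝ) (μ1 : Fin n1 → ℝ) (μ2 : Fin n2 → ℝ)
    (c π : Fin n1 → Fin n2 → ℝ) : Prop :=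
  π ∈ transportPolytope μ1 μ2 ∧
    ∀ θ ∈ transportPolytope μ1 μ2,
      frob c π + γ / 2 * frob π π ≤ frob c θ + γ / 2 * frob θ θ

/-- The regularized bilevel feasible set F_γ(μ2^d). -/
def regBilevelFeas {n1 n2 : ℕ} (γ : ℝ) (μ2d : Fin n2 → ℝ) :
    Set ((Fin n1 → Fin n2 → ℝ) × (Fin n1 → ℝ) × (Fin n1 → Fin n2 → ℝ)) :=
  {p | (∀ i, 0 ≤ p.2.1 i) ∧ ((∑ i, p.2.1 i) = ∑ j, μ2d j) ∧
    SolvesHreg γ p.2.1 μ2d p.2.2 p.1}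

/-- J is bounded on bounded sets. -/
def BddOnBddSets {n1 n2 : ℕ} (J : (Fin n1 → Fin n2 → ℝ) × (Fin n1 → ℝ) → ℝ) : Prop :=
  ∀ M : ℝ, 0 < M → ∃ B : ℝ, ∀ p : (Fin n1 → Fin n2 → ℝ) × (Fin n1 → ℝ), ‖p‖ ≤ M → J p ≤ B

/-! ### Auxiliary lemmas -/

lemma lsc_exists_lb {X : Type*} [TopologicalSpace X] {f : X → ℝ}
    (hf : LowerSemicontinuous f) {s : Set X} (hs : IsCompact s) :
    ∃ m : ℝ, ∀ x ∈ s, m ≤ f x := by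
  obtain ⟨t, ht⟩ := hs.elim_finite_subcover (fun y : X => f ⁻¹' Set.Ioi (f y - 1))
    (fun y => hf.isOpen_preimage _) (fun x _ => Set.mem_iUnion.2 ⟨x, by simp⟩)
  rcases t.eq_empty_or_nonempty with h | h
  · exact ⟨0, fun x hx => absurd (ht hx) (by simp [h])⟩
  · refine ⟨t.inf' h (fun y => f y - 1), fun x hx => ?_⟩
    obtain ⟨y, hyt, hy⟩ := Set.mem_iUnion₂.1 (ht hx)
    exact le_trans (Finset.inf'_le _ hyt) (le_of_lt hy)

lemma continuous_frob {n1 n2 : ℕ} :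
    Continuous (fun p : (Fin n1 → Fin n2 → ℝ) × (Fin n1 → Fin n2 → ℝ) => frob p.1 p.2) := by
  unfold frob
  fun_prop

lemma frob_tendsto {n1 n2 : ℕ} {f g : ℕ → Fin n1 → Fin n2 → ℝ} {a b : Fin n1 → Fin n2 → ℝ}
    (hf : Tendsto f atTop (𝓝 a)) (hg : Tendsto g atTop (𝓝 b)) :
    Tendsto (fun k => frob (f k) (g k)) atTop (𝓝 (frob a b)) := by
  unfold frob
  refine tendsto_finset_sum _ fun i _ => tendsto_finset_sum _ fun j _ => ?_
  exact (tendsto_pi_nhds.1 (tendsto_pi_nhds.1 hf i) j).mul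
    (tendsto_pi_nhds.1 (tendsto_pi_nhds.1 hg i) j)

lemma frob_self_nonneg {n1 n2 : ℕ} (a : Fin n1 → Fin n2 → ℝ) : 0 ≤ frob a a :=
  Finset.sum_nonneg fun _ _ => Finset.sum_nonneg fun _ _ => mul_self_nonneg _

lemma polytope_norm_le {n1 n2 : ℕ} {μ1 : Fin n1 → ℝ} {μ2 : Fin n2 → ℝ}
    (hμ2 : ∀ j, 0 ≤ μ2 j) {π : Fin n1 → Fin n2 → ℝ} (hπ : π ∈ transportPolytope μ1 μ2) :
    ‖π‖ ≤ ∑ j, μ2 j := by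
  have hS0 : 0 ≤ ∑ j, μ2 j := Finset.sum_nonneg fun j _ => hμ2 j
  rw [pi_norm_le_iff_of_nonneg hS0]
  intro i
  rw [pi_norm_le_iff_of_nonneg hS0]
  intro j
  rw [Real.norm_eq_abs, abs_of_nonneg (hπ.1 i j)]
  calc π i j ≤ ∑ i', π i' j :=
        Finset.single_le_sum (fun i' _ => hπ.1 i' j) (Finset.mem_univ i)
    _ = μ2 j := hπ.2.2 j
    _ ≤ ∑ j', μ2 j' := Finset.single_le_sum (fun j' _ => hμ2 j') (Finset.mem_univ j)

lemma polytope_isCompact {n1 n2 : ℕ} (μ1 : Fin n1 → ℝ) (μ2 : Fin n2 → ℝ)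
    (hμ2 : ∀ j, 0 ≤ μ2 j) : IsCompact (transportPolytope μ1 μ2) := by
  have hc : IsClosed (transportPolytope μ1 μ2) := by
    have : transportPolytope μ1 μ2 =
        (⋂ i, ⋂ j, {π : Fin n1 → Fin n2 → ℝ | 0 ≤ π i j}) ∩
        ((⋂ i, {π : Fin n1 → Fin n2 → ℝ | (∑ j, π i j) = μ1 i}) ∩
         (⋂ j, {π : Fin n1 → Fin n2 → ℝ | (∑ i, π i j) = μ2 j})) := by
      ext π
      simp only [transportPolytope, Set.mem_setOf_eq, Set.mem_inter_iff, Set.mem_iInter,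
        Set.mem_setOf_eq]
    rw [this]
    refine (isClosed_iInter fun i => isClosed_iInter fun j =>
      isClosed_le continuous_const (by fun_prop)).inter
      ((isClosed_iInter fun i => isClosed_eq (by fun_prop) continuous_const).inter
       (isClosed_iInter fun j => isClosed_eq (by fun_prop) continuous_const))
  refine Metric.isCompact_of_isClosed_isBounded hc ?_
  exact isBounded_iff_forall_norm_le.2 ⟨∑ j, μ2 j, fun π hπ => polytope_norm_le hμ2 hπ⟩

lemma continuous_frob_left {n1 n2 : ℕ} (c : Fin n1 → Fin n2 → ℝ) :
    Continuous fun θ : Fin n1 → Fin n2 → ℝ => frob c θ := by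
  unfold frob; fun_prop

lemma continuous_frob_self {n1 n2 : ℕ} :
    Continuous fun θ : Fin n1 → Fin n2 → ℝ => frob θ θ := by
  unfold frob; fun_prop

/-- Solutions of the regularized bilevel problems have a cluster point of the form
(π̄, μ̄1, c_d), and (π̄, μ̄1) is feasible for the non-regularized bilevel problem. -/
theorem regularized_solutions_cluster_point_feasible (n1 n2 : ℕ) (hn1 : 0 < n1) (hn2 : 0 < n2)
    (J : (Fin n1 → Fin n2 → ℝ) × (Fin n1 → ℝ) → ℝ)
    (hJ : LowerSemicontinuous J) (hJbdd : BddOnBddSets J)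
    (μ2d : Fin n2 → ℝ) (hμ2d : ∀ j, 0 ≤ μ2d j) (cd : Fin n1 → Fin n2 → ℝ)
    (γs : ℕ → ℝ) (hγpos : ∀ k, 0 < γs k) (hγ0 : Tendsto γs atTop (𝓝 0))
    (πs : ℕ → Fin n1 → Fin n2 → ℝ) (μs : ℕ → Fin n1 → ℝ) (cs : ℕ → Fin n1 → Fin n2 → ℝ)
    (hfeas : ∀ k, (πs k, μs k, cs k) ∈ regBilevelFeas (γs k) μ2d)
    (hmin : ∀ k, ∀ q ∈ regBilevelFeas (n1 := n1) (γs k) μ2d,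
      J (πs k, μs k) + 1 / (2 * γs k) * frob (cs k - cd) (cs k - cd) ≤
        J (q.1, q.2.1) + 1 / (2 * γs k) * frob (q.2.2 - cd) (q.2.2 - cd)) :
    ∃ (φ : ℕ → ℕ) (πb : Fin n1 → Fin n2 → ℝ) (μb : Fin n1 → ℝ),
      StrictMono φ ∧
      Tendsto (fun k => (πs (φ k), μs (φ k), cs (φ k))) atTop (𝓝 (πb, μb, cd)) ∧
      (∀ i, 0 ≤ μb i) ∧ ((∑ i, μb i) = ∑ j, μ2d j) ∧ SolvesH μb μ2d cd πb := by
  classical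
  set S : ℝ := ∑ j, μ2d j with hSdef
  have hS0 : 0 ≤ S := Finset.sum_nonneg fun j _ => hμ2d j
  have hn1' : (0:ℝ) < n1 := by exact_mod_cast hn1
  have hn1'' : (1:ℝ) ≤ n1 := by exact_mod_cast hn1
  -- feasibility facts
  have hπmem : ∀ k, πs k ∈ transportPolytope (μs k) μ2d := fun k => ((hfeas k).2.2).1
  have hμnn : ∀ k i, 0 ≤ μs k i := fun k => (hfeas k).1
  have hμsum : ∀ k, (∑ i, μs k i) = S := fun k => (hfeas k).2.1
  have hμle : ∀ k i, μs k i ≤ S := fun k i =>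
    (hμsum k) ▸ Finset.single_le_sum (fun i' _ => hμnn k i') (Finset.mem_univ i)
  -- norm bounds
  have hnorm : ∀ k, ‖((πs k, μs k) : (Fin n1 → Fin n2 → ℝ) × (Fin n1 → ℝ))‖ ≤ S := by
    intro k
    rw [Prod.norm_def]
    refine max_le (polytope_norm_le hμ2d (hπmem k)) ?_
    rw [pi_norm_le_iff_of_nonneg hS0]
    intro i
    rw [Real.norm_eq_abs, abs_of_nonneg (hμnn k i)]
    exact hμle k i
  -- reference point
  set μhat : Fin n1 → ℝ := fun _ => S / n1 with hμhat
  have hμhatsum : (∑ _i : Fin n1, S / (n1:ℝ)) = S := by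
    rw [Finset.sum_const, Finset.card_univ, Fintype.card_fin, nsmul_eq_mul]
    field_simp
  have hπ0mem : (fun (_ : Fin n1) j => μ2d j / n1) ∈ transportPolytope μhat μ2d := by
    refine ⟨fun i j => div_nonneg (hμ2d j) hn1'.le, fun i => ?_, fun j => ?_⟩
    · rw [← Finset.sum_div]
    · rw [Finset.sum_const, Finset.card_univ, Fintype.card_fin, nsmul_eq_mul]
      field_simp
  have hPcomp := polytope_isCompact μhat μ2d hμ2d
  have hθref : ∀ k, ∃ θ, SolvesHreg (γs k) μhat μ2d cd θ := by
    intro k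
    obtain ⟨θ, hθP, hθm⟩ := hPcomp.exists_isMinOn ⟨_, hπ0mem⟩
      (((continuous_frob_left cd).add (continuous_const.mul continuous_frob_self)).continuousOn)
    exact ⟨θ, hθP, fun θ' hθ' => hθm hθ'⟩
  choose θref hθrefP using hθref
  have hqfeas : ∀ k, ((θref k, μhat, cd) :
      (Fin n1 → Fin n2 → ℝ) × (Fin n1 → ℝ) × (Fin n1 → Fin n2 → ℝ)) ∈
      regBilevelFeas (γs k) μ2d :=
    fun k => ⟨fun i => div_nonneg hS0 hn1'.le, hμhatsum, hθrefP k⟩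
  -- bounds on J
  obtain ⟨B, hB⟩ := hJbdd (S + 1) (by linarith)
  obtain ⟨m, hm⟩ := lsc_exists_lb hJ
    (isCompact_closedBall (0 : (Fin n1 → Fin n2 → ℝ) × (Fin n1 → ℝ)) (S + 1))
  have hJub : ∀ k, J (θref k, μhat) ≤ B := by
    intro k
    apply hB
    rw [Prod.norm_def]
    refine max_le (le_trans (polytope_norm_le hμ2d (hθrefP k).1) (by linarith)) ?_
    rw [pi_norm_le_iff_of_nonneg (by linarith : (0:ℝ) ≤ S + 1)]
    intro i
    rw [Real.norm_eq_abs, hμhat, abs_of_nonneg (div_nonneg hS0 hn1'.le)]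
    have : S / (n1:ℝ) ≤ S := div_le_self hS0 hn1''
    linarith
  have hJlb : ∀ k, m ≤ J (πs k, μs k) := fun k =>
    hm _ (mem_closedBall_zero_iff.2 (le_trans (hnorm k) (by linarith)))
  -- key estimate forcing cs → cd
  have hcd0 : frob (cd - cd) (cd - cd) = 0 := by simp [frob]
  have hest : ∀ k, frob (cs k - cd) (cs k - cd) ≤ 2 * γs k * (B - m) := by
    intro k
    have h1 := hmin k _ (hqfeas k)
    simp only [hcd0, mul_zero, add_zero] at h1
    have hγ := hγpos k
    have h4 : 1 / (2 * γs k) * frob (cs k - cd) (cs k - cd) ≤ B - m := by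
      have h2 := hJub k
      have h3 := hJlb k
      linarith
    calc frob (cs k - cd) (cs k - cd)
        = 2 * γs k * (1 / (2 * γs k) * frob (cs k - cd) (cs k - cd)) := by field_simp
      _ ≤ 2 * γs k * (B - m) := mul_le_mul_of_nonneg_left h4 (by positivity)
  have hFto : Tendsto (fun k => frob (cs k - cd) (cs k - cd)) atTop (𝓝 0) := by
    have hub : Tendsto (fun k => 2 * γs k * (B - m)) atTop (𝓝 0) := by
      have := (hγ0.const_mul 2).mul_const (B - m)
      simpa using this
    exact tendsto_of_tendsto_of_tendsto_of_le_of_le tendsto_const_nhds hub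
      (fun k => frob_self_nonneg _) hest
  have hcs : Tendsto cs atTop (𝓝 cd) := by
    rw [tendsto_pi_nhds]; intro i; rw [tendsto_pi_nhds]; intro j
    rw [tendsto_iff_dist_tendsto_zero]
    have key : ∀ k, (cs k i j - cd i j) ^ 2 ≤ frob (cs k - cd) (cs k - cd) := by
      intro k
      calc (cs k i j - cd i j) ^ 2 = (cs k - cd) i j * (cs k - cd) i j := by
            simp [Pi.sub_apply]; ring
        _ ≤ ∑ j', (cs k - cd) i j' * (cs k - cd) i j' :=
            Finset.single_le_sum (f := fun j' => (cs k - cd) i j' * (cs k - cd) i j')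
              (fun j' _ => mul_self_nonneg _) (Finset.mem_univ j)
        _ ≤ frob (cs k - cd) (cs k - cd) :=
            Finset.single_le_sum
              (f := fun i' => ∑ j', (cs k - cd) i' j' * (cs k - cd) i' j')
              (fun i' _ => Finset.sum_nonneg fun j' _ => mul_self_nonneg _) (Finset.mem_univ i)
    have hsqto : Tendsto (fun k => (cs k i j - cd i j) ^ 2) atTop (𝓝 0) :=
      tendsto_of_tendsto_of_tendsto_of_le_of_le tendsto_const_nhds hFto
        (fun k => sq_nonneg _) key
    have h5 := hsqto.sqrt
    simp only [Real.sqrt_sq_eq_abs, Real.sqrt_zero] at h5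
    simpa [Real.dist_eq] using h5
  -- extract convergent subsequence
  have hball : ∀ k, ((πs k, μs k) : (Fin n1 → Fin n2 → ℝ) × (Fin n1 → ℝ)) ∈
      Metric.closedBall 0 (S + 1) := fun k =>
    mem_closedBall_zero_iff.2 (le_trans (hnorm k) (by linarith))
  obtain ⟨p, _hpcl, φ, hφ, hconv⟩ :=
    tendsto_subseq_of_bounded Metric.isBounded_closedBall hball
  have hπc : Tendsto (fun k => πs (φ k)) atTop (𝓝 p.1) := (continuous_fst.tendsto p).comp hconv
  have hμc : Tendsto (fun k => μs (φ k)) atTop (𝓝 p.2) := (continuous_snd.tendsto p).comp hconv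
  have hcc : Tendsto (fun k => cs (φ k)) atTop (𝓝 cd) := hcs.comp hφ.tendsto_atTop
  have hγc : Tendsto (fun k => γs (φ k)) atTop (𝓝 0) := hγ0.comp hφ.tendsto_atTop
  have hμci : ∀ i, Tendsto (fun k => μs (φ k) i) atTop (𝓝 (p.2 i)) :=
    fun i => tendsto_pi_nhds.1 hμc i
  have hπcij : ∀ i j, Tendsto (fun k => πs (φ k) i j) atTop (𝓝 (p.1 i j)) :=
    fun i j => tendsto_pi_nhds.1 (tendsto_pi_nhds.1 hπc i) j
  -- limit constraints
  have hμbnn : ∀ i, 0 ≤ p.2 i := fun i => ge_of_tendsto' (hμci i) (fun k => hμnn (φ k) i)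
  have hμbsum : (∑ i, p.2 i) = S := by
    have h1 : Tendsto (fun k => ∑ i, μs (φ k) i) atTop (𝓝 (∑ i, p.2 i)) :=
      tendsto_finset_sum _ fun i _ => hμci i
    have h2 : (fun k => ∑ i, μs (φ k) i) = fun _ => S := funext fun k => hμsum (φ k)
    rw [h2] at h1
    exact tendsto_nhds_unique h1 tendsto_const_nhds
  have hπbmem : p.1 ∈ transportPolytope p.2 μ2d := by
    refine ⟨fun i j => ge_of_tendsto' (hπcij i j) (fun k => (hπmem (φ k)).1 i j),
      fun i => ?_, fun j => ?_⟩
    · have h1 : Tendsto (fun k => ∑ j, πs (φ k) i j) atTop (𝓝 (∑ j, p.1 i j)) :=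
        tendsto_finset_sum _ fun j _ => hπcij i j
      have h2 : (fun k => ∑ j, πs (φ k) i j) = fun k => μs (φ k) i :=
        funext fun k => (hπmem (φ k)).2.1 i
      rw [h2] at h1
      exact tendsto_nhds_unique h1 (hμci i)
    · have h1 : Tendsto (fun k => ∑ i, πs (φ k) i j) atTop (𝓝 (∑ i, p.1 i j)) :=
        tendsto_finset_sum _ fun i _ => hπcij i j
      have h2 : (fun k => ∑ i, πs (φ k) i j) = fun _ => μ2d j :=
        funext fun k => (hπmem (φ k)).2.2 j
      rw [h2] at h1
      exact tendsto_nhds_unique h1 tendsto_const_nhds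
  refine ⟨φ, p.1, p.2, hφ, hπc.prodMk_nhds (hμc.prodMk_nhds hcc), hμbnn, hμbsum, hπbmem, ?_⟩
  -- optimality of the limit for the Hitchcock problem
  intro θ hθ
  by_cases hSz : S = 0
  · -- degenerate case: everything vanishes
    have hμ2z : ∀ j, μ2d j = 0 := by
      intro j
      have hsum0 : (∑ j', μ2d j') = 0 := by rw [← hSdef]; exact hSz
      exact (Finset.sum_eq_zero_iff_of_nonneg (fun j' _ => hμ2d j')).1 hsum0 j
        (Finset.mem_univ j)
    have hθz : ∀ i j, θ i j = 0 := by
      intro i j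
      refine le_antisymm ?_ (hθ.1 i j)
      calc θ i j ≤ ∑ i', θ i' j :=
            Finset.single_le_sum (fun i' _ => hθ.1 i' j) (Finset.mem_univ i)
        _ = μ2d j := hθ.2.2 j
        _ = 0 := hμ2z j
    have hπz : ∀ i j, p.1 i j = 0 := by
      intro i j
      refine le_antisymm ?_ (hπbmem.1 i j)
      calc p.1 i j ≤ ∑ i', p.1 i' j :=
            Finset.single_le_sum (fun i' _ => hπbmem.1 i' j) (Finset.mem_univ i)
        _ = μ2d j := hπbmem.2.2 j
        _ = 0 := hμ2z j
    simp [frob, hθz, hπz]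
  · have hSpos : 0 < S := lt_of_le_of_ne hS0 (Ne.symm hSz)
    -- a positive lower bound for the positive coordinates of p.2
    have hAne : ∃ i, 0 < p.2 i := by
      by_contra h
      push_neg at h
      have hz : ∀ i, p.2 i = 0 := fun i => le_antisymm (h i) (hμbnn i)
      have h0 : (0:ℝ) = S := by
        rw [← hμbsum]
        exact (Finset.sum_eq_zero fun i _ => hz i).symm
      linarith
    set A : Finset (Fin n1) := Finset.univ.filter (fun i => 0 < p.2 i) with hA
    have hAne' : A.Nonempty := by
      obtain ⟨i, hi⟩ := hAne
      exact ⟨i, by simp [hA, hi]⟩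
    set m0 : ℝ := A.inf' hAne' p.2 with hm0
    have hm0pos : 0 < m0 := by
      rw [hm0, Finset.lt_inf'_iff]
      intro i hi
      exact (Finset.mem_filter.1 hi).2
    have hm0le : ∀ i, 0 < p.2 i → m0 ≤ p.2 i := fun i hi =>
      Finset.inf'_le _ (by simp [hA, hi])
    set d : ℕ → ℝ := fun k => ‖μs (φ k) - p.2‖ with hd
    have hdnn : ∀ k, 0 ≤ d k := fun k => norm_nonneg _
    have hdco : ∀ k i, |μs (φ k) i - p.2 i| ≤ d k := by
      intro k i
      have h6 := norm_le_pi_norm (μs (φ k) - p.2) i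
      simpa [Real.norm_eq_abs] using h6
    have hdto : Tendsto d atTop (𝓝 0) := tendsto_iff_norm_sub_tendsto_zero.1 hμc
    set t : ℕ → ℝ := fun k => min 1 (d k / m0) with htdef
    have ht0 : ∀ k, 0 ≤ t k := fun k => le_min zero_le_one (div_nonneg (hdnn k) hm0pos.le)
    have ht1 : ∀ k, t k ≤ 1 := fun k => min_le_left _ _
    have htto : Tendsto t atTop (𝓝 0) := by
      have h7 : Tendsto (fun k => min 1 (d k / m0)) atTop (𝓝 (min 1 (0 / m0))) :=
        tendsto_const_nhds.min (hdto.div_const m0)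
      simpa [htdef] using h7
    have hkey : ∀ k i, (1 - t k) * p.2 i ≤ μs (φ k) i := by
      intro k i
      rcases eq_or_lt_of_le (hμbnn i) with h | h
      · rw [← h, mul_zero]
        exact hμnn (φ k) i
      · have hm0i := hm0le i h
        rcases le_or_gt 1 (d k / m0) with hc | hc
        · have htk1 : t k = 1 := by rw [htdef]; exact min_eq_left hc
          rw [htk1]
          simpa using hμnn (φ k) i
        · have htk : t k = d k / m0 := by rw [htdef]; exact min_eq_right hc.le
          have h1 : p.2 i - d k ≤ μs (φ k) i := by
            have h8 := abs_le.1 (hdco k i)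
            linarith [h8.1]
          have h2 : t k * m0 = d k := by
            rw [htk]; field_simp
          nlinarith [mul_le_mul_of_nonneg_left hm0i (ht0 k)]
    -- perturbed competitors feasible for the regularized problems
    set θk : ℕ → Fin n1 → Fin n2 → ℝ := fun k i j =>
      (1 - t k) * θ i j + (μs (φ k) i - (1 - t k) * p.2 i) * μ2d j / S with hθkdef
    have hθkmem : ∀ k, θk k ∈ transportPolytope (μs (φ k)) μ2d := by
      intro k
      refine ⟨fun i j => ?_, fun i => ?_, fun j => ?_⟩
      · apply add_nonneg
        · exact mul_nonneg (by linarith [ht1 k]) (hθ.1 i j)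
        · exact div_nonneg (mul_nonneg (by linarith [hkey k i]) (hμ2d j)) hS0
      · have h9 : (∑ j, θk k i j) =
            (1 - t k) * (∑ j, θ i j) +
              (μs (φ k) i - (1 - t k) * p.2 i) / S * (∑ j, μ2d j) := by
          rw [Finset.mul_sum, Finset.mul_sum, ← Finset.sum_add_distrib]
          exact Finset.sum_congr rfl fun j _ => by simp only [hθkdef]; ring
        rw [h9, hθ.2.1 i, ← hSdef]
        field_simp
        ring
      · have h9 : (∑ i, θk k i j) =
            (1 - t k) * (∑ i, θ i j) +
              ((∑ i, μs (φ k) i) - (1 - t k) * (∑ i, p.2 i)) * μ2d j / S := by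
          simp only [hθkdef]
          rw [Finset.sum_add_distrib, ← Finset.mul_sum]
          congr 1
          rw [← Finset.sum_div, ← Finset.sum_mul, Finset.sum_sub_distrib, ← Finset.mul_sum]
        rw [h9, hθ.2.2 j, hμsum (φ k), hμbsum]
        field_simp
        ring
    have hθkto : Tendsto θk atTop (𝓝 θ) := by
      rw [tendsto_pi_nhds]; intro i; rw [tendsto_pi_nhds]; intro j
      have h1 : Tendsto (fun k =>
          (1 - t k) * θ i j + (μs (φ k) i - (1 - t k) * p.2 i) * μ2d j / S) atTop
          (𝓝 ((1 - 0) * θ i j + (p.2 i - (1 - 0) * p.2 i) * μ2d j / S)) := by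
        refine Tendsto.add ?_ ?_
        · exact (tendsto_const_nhds.sub htto).mul tendsto_const_nhds
        · exact (((hμci i).sub ((tendsto_const_nhds.sub htto).mul tendsto_const_nhds)).mul
            tendsto_const_nhds).div_const S
      simp only [hθkdef]
      simpa using h1
    -- pass to the limit in the regularized optimality conditions
    have hineq : ∀ k,
        frob (cs (φ k)) (πs (φ k)) + γs (φ k) / 2 * frob (πs (φ k)) (πs (φ k)) ≤
          frob (cs (φ k)) (θk k) + γs (φ k) / 2 * frob (θk k) (θk k) :=
      fun k => ((hfeas (φ k)).2.2).2 (θk k) (hθkmem k)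
    have hL : Tendsto (fun k =>
        frob (cs (φ k)) (πs (φ k)) + γs (φ k) / 2 * frob (πs (φ k)) (πs (φ k))) atTop
        (𝓝 (frob cd p.1 + 0 / 2 * frob p.1 p.1)) :=
      (frob_tendsto hcc hπc).add ((hγc.div_const 2).mul (frob_tendsto hπc hπc))
    have hR : Tendsto (fun k =>
        frob (cs (φ k)) (θk k) + γs (φ k) / 2 * frob (θk k) (θk k)) atTop
        (𝓝 (frob cd θ + 0 / 2 * frob θ θ)) :=
      (frob_tendsto hcc hθkto).add ((hγc.div_const 2).mul (frob_tendsto hθkto hθkto))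
    have hfin := le_of_tendsto_of_tendsto' hL hR hineq
    simpa using hfin
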